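/- (Lemma 1) Let s > 0, a > 0 and 0 ≤ β ≤ 1. Then the function g : [0,∞) → ℝ defined by g(I) = (1 + s/(I + a))^(−β) is concave on [0,∞). -/

import Mathlib

open Set

private lemma concaveOn_congr' {s : Set ℝ} {f g : ℝ → ℝ} (hf : ConcaveOn ℝ s f)
    (h : ∀ x ∈ s, f x = g x) : ConcaveOn ℝ s g :=
  ⟨hf.1, fun x hx y hy t u ht hu htu => by
    rw [← h x hx, ← h y hy, ← h _ (hf.1 hx hy ht hu htu)]
    exact hf.2 hx hy ht hu htu⟩

private lemma concaveOn_comp' {s t : Set ℝ} {f g : ℝ → ℝ} (hg : ConcaveOn ℝ t g)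
    (hf : ConcaveOn ℝ s f) (hg' : MonotoneOn g t) (hmap : Set.MapsTo f s t) :
    ConcaveOn ℝ s (g ∘ f) :=
  ⟨hf.1, fun x hx y hy u v hu hv huv =>
    (hg.2 (hmap hx) (hmap hy) hu hv huv).trans <|
      hg' (hg.1 (hmap hx) (hmap hy) hu hv huv)
        (hmap <| hf.1 hx hy hu hv huv) <| hf.2 hx hy hu hv huv⟩

/-- Lemma 1: for 0 ≤ β ≤ 1, the function g(I) = (1 + s/(I + a))^(−β)
is concave on [0, ∞). -/
theorem g_concaveOn (s a β : ℝ) (hs : 0 < s) (ha : 0 < a)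
    (hβ0 : 0 ≤ β) (hβ1 : β ≤ 1) :
    ConcaveOn ℝ (Set.Ici (0 : ℝ)) (fun I : ℝ => (1 + s / (I + a)) ^ (-β)) := by
  set c : ℝ := a + s with hc
  have hc0 : 0 < c := by positivity
  -- convexity of I ↦ (I + c)⁻¹ on [0, ∞)
  have hinv : ConvexOn ℝ (Set.Ici (0 : ℝ)) (fun I : ℝ => (I + c)⁻¹) := by
    have h1 : ConvexOn ℝ (Set.Ioi (0 : ℝ)) (fun x : ℝ => x ^ (-1 : ℤ)) :=
      convexOn_zpow (-1)
    have h2 := h1.comp_affineMap (AffineMap.id ℝ ℝ + AffineMap.const ℝ ℝ c)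
    have h3 : ConvexOn ℝ ((AffineMap.id ℝ ℝ + AffineMap.const ℝ ℝ c) ⁻¹' (Set.Ioi 0))
        (fun I : ℝ => (I + c)⁻¹) := by
      have hfun : (fun I : ℝ => (I + c)⁻¹) =
          ((fun x : ℝ => x ^ (-1 : ℤ)) ∘ ⇑(AffineMap.id ℝ ℝ + AffineMap.const ℝ ℝ c)) := by
        funext x
        simp [zpow_neg_one]
      rw [hfun]; exact h2
    refine h3.subset (fun x hx => ?_) (convex_Ici 0)
    have hx0 : (0 : ℝ) ≤ x := hx
    simp only [Set.mem_preimage, Set.mem_Ioi]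
    have heq : (AffineMap.id ℝ ℝ + AffineMap.const ℝ ℝ c) x = x + c := by simp
    rw [heq]
    linarith
  -- concavity of f : I ↦ 1 - s * (I + c)⁻¹
  have hf : ConcaveOn ℝ (Set.Ici (0 : ℝ)) (fun I : ℝ => 1 - s * (I + c)⁻¹) := by
    have := (concaveOn_const (1 : ℝ) (convex_Ici 0)).sub (hinv.smul hs.le)
    exact this
  -- f maps [0, ∞) into [0, ∞)
  have hmap : Set.MapsTo (fun I : ℝ => 1 - s * (I + c)⁻¹) (Set.Ici (0 : ℝ))
      (Set.Ici (0 : ℝ)) := by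
    intro x hx
    have hx0 : (0 : ℝ) ≤ x := hx
    have hxc : (0 : ℝ) < x + c := by linarith
    have : s * (x + c)⁻¹ ≤ 1 := by
      rw [← div_eq_mul_inv, div_le_one hxc]; linarith
    simp only [Set.mem_Ici]; linarith
  -- rpow is concave and monotone on [0, ∞)
  have hrpow : ConcaveOn ℝ (Set.Ici (0 : ℝ)) (fun x : ℝ => x ^ β) :=
    Real.concaveOn_rpow hβ0 hβ1
  have hmono : MonotoneOn (fun x : ℝ => x ^ β) (Set.Ici (0 : ℝ)) := by
    intro x hx y _ hxy
    exact Real.rpow_le_rpow hx hxy hβ0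
  have hcomp := concaveOn_comp' hrpow hf hmono hmap
  refine concaveOn_congr' hcomp (fun x hx => ?_)
  have hx0 : (0 : ℝ) ≤ x := hx
  have hxa : (0 : ℝ) < x + a := by linarith
  have hxc : (0 : ℝ) < x + c := by linarith
  have h1 : (1 : ℝ) + s / (x + a) = (x + c) / (x + a) := by
    field_simp [hc]; ring
  have h2 : (1 : ℝ) - s * (x + c)⁻¹ = (x + a) / (x + c) := by
    field_simp [hc]; ring
  have hpos : (0 : ℝ) < 1 + s / (x + a) := by positivity
  show ((1 : ℝ) - s * (x + c)⁻¹) ^ β = (1 + s / (x + a)) ^ (-β)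
  rw [h2, ← inv_div, ← h1, Real.inv_rpow hpos.le, ← Real.rpow_neg hpos.le]
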